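/- The pessimistic interval Bellman operator G̲ is a γ-contraction with respect to the ℓ∞-norm: for all v, w ∈ ℝ^S, ‖G̲(v) − G̲(w)‖∞ ≤ γ ‖v − w‖∞. -/
import Mathlib


/-- The ambiguity set `Δ_{s,a}` of transition probability vectors compatible with the
interval bounds `Plow`, `Pup` at state `s` and action `a`. -/
def ambiguitySet {S A : Type*} [Fintype S] (Plow Pup : S → S → A → ℝ) (s : S) (a : A) :
    Set (S → ℝ) :=
  {p | (∀ s', 0 ≤ p s' ∧ p s' ≤ 1 ∧ Plow s' s a ≤ p s' ∧ p s' ≤ Pup s' s a) ∧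
    ∑ s', p s' = 1}

/-- `min_{p ∈ Δ_{s,a}} ∑_{s' ∈ S} p(s') v(s')`. -/
noncomputable def minExp {S A : Type*} [Fintype S] (Plow Pup : S → S → A → ℝ)
    (s : S) (a : A) (v : S → ℝ) : ℝ :=
  sInf ((fun p : S → ℝ => ∑ s', p s' * v s') '' ambiguitySet Plow Pup s a)

/-- `max_{p ∈ Δ_{s,a}} ∑_{s' ∈ S} p(s') v(s')`. -/
noncomputable def maxExp {S A : Type*} [Fintype S] (Plow Pup : S → S → A → ℝ)
    (s : S) (a : A) (v : S → ℝ) : ℝ :=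
  sSup ((fun p : S → ℝ => ∑ s', p s' * v s') '' ambiguitySet Plow Pup s a)

/-- The pessimistic Bellman-policy operator
`F̲(v,π)(s) = R̲(s,π(s)) + γ · min_{p ∈ Δ_{s,π(s)}} ∑_{s'} p(s') v(s')`. -/
noncomputable def Fpess {S A : Type*} [Fintype S] (Plow Pup : S → S → A → ℝ)
    (Rlow : S → A → ℝ) (γ : ℝ) (v : S → ℝ) (π : S → A) (s : S) : ℝ :=
  Rlow s (π s) + γ * minExp Plow Pup s (π s) v

/-- The optimistic Bellman-policy operator
`F̄(v,π)(s) = R̄(s,π(s)) + γ · max_{p ∈ Δ_{s,π(s)}} ∑_{s'} p(s') v(s')`. -/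
noncomputable def Fopt {S A : Type*} [Fintype S] (Plow Pup : S → S → A → ℝ)
    (Rup : S → A → ℝ) (γ : ℝ) (v : S → ℝ) (π : S → A) (s : S) : ℝ :=
  Rup s (π s) + γ * maxExp Plow Pup s (π s) v

/-- The pessimistic interval Bellman operator
`G̲(v)(s) = sup_{a ∈ A} [ R̲(s,a) + γ · min_{p ∈ Δ_{s,a}} ∑_{s'} p(s') v(s') ]`. -/
noncomputable def Gpess {S A : Type*} [Fintype S] (Plow Pup : S → S → A → ℝ)
    (Rlow : S → A → ℝ) (γ : ℝ) (v : S → ℝ) (s : S) : ℝ :=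
  ⨆ a : A, (Rlow s a + γ * minExp Plow Pup s a v)

/-- The optimistic interval Bellman operator
`Ḡ(v)(s) = sup_{a ∈ A} [ R̄(s,a) + γ · max_{p ∈ Δ_{s,a}} ∑_{s'} p(s') v(s') ]`. -/
noncomputable def Gopt {S A : Type*} [Fintype S] (Plow Pup : S → S → A → ℝ)
    (Rup : S → A → ℝ) (γ : ℝ) (v : S → ℝ) (s : S) : ℝ :=
  ⨆ a : A, (Rup s a + γ * maxExp Plow Pup s a v)

lemma amb_nonempty {S A : Type*} [Fintype S] (Plow Pup : S → S → A → ℝ)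
    (hP01 : ∀ s' s a, 0 ≤ Plow s' s a ∧ Pup s' s a ≤ 1)
    (hPle : ∀ s' s a, Plow s' s a ≤ Pup s' s a)
    (hPsum : ∀ s a, (∑ s', Plow s' s a) ≤ 1 ∧ 1 ≤ ∑ s', Pup s' s a)
    (s : S) (a : A) : (ambiguitySet Plow Pup s a).Nonempty := by
  obtain ⟨hL, hU⟩ := hPsum s a
  set L := ∑ s', Plow s' s a with hLdef
  set U := ∑ s', Pup s' s a with hUdef
  rcases eq_or_lt_of_le (le_trans hL hU) with h | h
  · refine ⟨fun s' => Plow s' s a, fun s' =>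
      ⟨(hP01 s' s a).1, le_trans (hPle s' s a) (hP01 s' s a).2, le_refl _, hPle s' s a⟩, ?_⟩
    have : L = 1 := le_antisymm hL (by rw [h]; exact hU)
    exact this
  · set t := (1 - L) / (U - L) with htdef
    have ht0 : 0 ≤ t := div_nonneg (by linarith) (by linarith)
    have ht1 : t ≤ 1 := by rw [div_le_one (by linarith)]; linarith
    refine ⟨fun s' => Plow s' s a + t * (Pup s' s a - Plow s' s a), fun s' => ?_, ?_⟩
    · have hd : 0 ≤ Pup s' s a - Plow s' s a := by linarith [hPle s' s a]
      have h1 : Plow s' s a ≤ Plow s' s a + t * (Pup s' s a - Plow s' s a) := by nlinarith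
      have h2 : Plow s' s a + t * (Pup s' s a - Plow s' s a) ≤ Pup s' s a := by nlinarith
      exact ⟨le_trans (hP01 s' s a).1 h1, le_trans h2 (hP01 s' s a).2, h1, h2⟩
    · have hsum : ∑ s', (Plow s' s a + t * (Pup s' s a - Plow s' s a))
          = L + t * (U - L) := by
        rw [Finset.sum_add_distrib, ← Finset.mul_sum, Finset.sum_sub_distrib]
      have hne : (U - L) ≠ 0 := by linarith
      have : t * (U - L) = 1 - L := by rw [htdef, div_mul_cancel₀ _ hne]
      rw [hsum, this]; ring


lemma abs_mul_le_of_mem {S A : Type*} [Fintype S] {Plow Pup : S → S → A → ℝ} {s : S} {a : A}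
    {p : S → ℝ} (hp : p ∈ ambiguitySet Plow Pup s a) (v : S → ℝ) (s' : S) :
    |p s' * v s'| ≤ |v s'| := by
  rw [abs_mul, abs_of_nonneg (hp.1 s').1]
  calc p s' * |v s'| ≤ 1 * |v s'| := mul_le_mul_of_nonneg_right (hp.1 s').2.1 (abs_nonneg _)
    _ = |v s'| := one_mul _

lemma exp_bddBelow {S A : Type*} [Fintype S] (Plow Pup : S → S → A → ℝ)
    (s : S) (a : A) (v : S → ℝ) :
    BddBelow ((fun p : S → ℝ => ∑ s', p s' * v s') '' ambiguitySet Plow Pup s a) := by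
  refine ⟨-∑ s', |v s'|, ?_⟩
  rintro x ⟨p, hp, rfl⟩
  rw [← Finset.sum_neg_distrib]
  refine Finset.sum_le_sum fun s' _ => ?_
  have := abs_le.mp (abs_mul_le_of_mem hp v s')
  linarith [this.1]

lemma minExp_le_add {S A : Type*} [Fintype S] (Plow Pup : S → S → A → ℝ)
    (s : S) (a : A) (v w : S → ℝ)
    (hne : (ambiguitySet Plow Pup s a).Nonempty) :
    minExp Plow Pup s a v ≤ minExp Plow Pup s a w + ‖v - w‖ := by
  have key : ∀ p ∈ ambiguitySet Plow Pup s a,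
      ∑ s', p s' * v s' ≤ ∑ s', p s' * w s' + ‖v - w‖ := by
    intro p hp
    have : ∑ s', p s' * v s' - ∑ s', p s' * w s' = ∑ s', p s' * (v s' - w s') := by
      rw [← Finset.sum_sub_distrib]; congr 1; ext s'; ring
    have hb : ∑ s', p s' * (v s' - w s') ≤ ∑ s', p s' * ‖v - w‖ := by
      refine Finset.sum_le_sum fun s' _ => ?_
      refine mul_le_mul_of_nonneg_left ?_ (hp.1 s').1
      calc v s' - w s' ≤ |v s' - w s'| := le_abs_self _
        _ = ‖(v - w) s'‖ := by simp [Real.norm_eq_abs]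
        _ ≤ ‖v - w‖ := norm_le_pi_norm (v - w) s'
    have hsum : ∑ s', p s' * ‖v - w‖ = ‖v - w‖ := by
      rw [← Finset.sum_mul, hp.2, one_mul]
    linarith
  have h1 : minExp Plow Pup s a v - ‖v - w‖ ≤ minExp Plow Pup s a w := by
    refine le_csInf (hne.image _) ?_
    rintro b ⟨p, hp, rfl⟩
    have : minExp Plow Pup s a v ≤ ∑ s', p s' * v s' :=
      csInf_le (exp_bddBelow Plow Pup s a v) ⟨p, hp, rfl⟩
    linarith [key p hp]
  linarith

lemma minExp_abs_le {S A : Type*} [Fintype S] (Plow Pup : S → S → A → ℝ)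
    (s : S) (a : A) (v : S → ℝ)
    (hne : (ambiguitySet Plow Pup s a).Nonempty) :
    |minExp Plow Pup s a v| ≤ ∑ s', |v s'| := by
  obtain ⟨p, hp⟩ := hne
  have hub : minExp Plow Pup s a v ≤ ∑ s', |v s'| := by
    refine le_trans (csInf_le (exp_bddBelow Plow Pup s a v) ⟨p, hp, rfl⟩) ?_
    refine Finset.sum_le_sum fun s' _ => ?_
    exact le_trans (le_abs_self _) (abs_mul_le_of_mem hp v s')
  have hlb : -(∑ s', |v s'|) ≤ minExp Plow Pup s a v := by
    refine le_csInf (⟨_, ⟨p, hp, rfl⟩⟩) ?_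
    rintro b ⟨q, hq, rfl⟩
    rw [← Finset.sum_neg_distrib]
    refine Finset.sum_le_sum fun s' _ => ?_
    have := abs_le.mp (abs_mul_le_of_mem hq v s')
    linarith [this.1]
  exact abs_le.mpr ⟨by linarith, hub⟩

/-- the pessimistic interval Bellman operator is a γ-contraction with
respect to the ℓ∞-norm. -/
theorem Gpess_contraction {S A : Type*} [Fintype S] [Nonempty S] [Nonempty A]
    (γ : ℝ) (hγ0 : 0 < γ) (hγ1 : γ < 1)
    (Plow Pup : S → S → A → ℝ)
    (hP01 : ∀ s' s a, 0 ≤ Plow s' s a ∧ Pup s' s a ≤ 1)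
    (hPle : ∀ s' s a, Plow s' s a ≤ Pup s' s a)
    (hPsum : ∀ s a, (∑ s', Plow s' s a) ≤ 1 ∧ 1 ≤ ∑ s', Pup s' s a)
    (Rlow : S → A → ℝ) (hRbdd : ∀ s, BddAbove (Set.range fun a => Rlow s a))
    (v w : S → ℝ) :
    ‖Gpess Plow Pup Rlow γ v - Gpess Plow Pup Rlow γ w‖ ≤ γ * ‖v - w‖ := by

  have hne : ∀ s a, (ambiguitySet Plow Pup s a).Nonempty :=
    amb_nonempty Plow Pup hP01 hPle hPsum
  have hbdd : ∀ (u : S → ℝ) (s : S),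
      BddAbove (Set.range fun a => Rlow s a + γ * minExp Plow Pup s a u) := by
    intro u s
    obtain ⟨M, hM⟩ := hRbdd s
    refine ⟨M + γ * ∑ s', |u s'|, ?_⟩
    rintro x ⟨a, rfl⟩
    dsimp only
    have h1 : Rlow s a ≤ M := hM ⟨a, rfl⟩
    have h2 : minExp Plow Pup s a u ≤ ∑ s', |u s'| :=
      (abs_le.mp (minExp_abs_le Plow Pup s a u (hne s a))).2
    have := mul_le_mul_of_nonneg_left h2 hγ0.le
    linarith
  have hkey : ∀ (x y : S → ℝ) (s : S),
      Gpess Plow Pup Rlow γ x s ≤ Gpess Plow Pup Rlow γ y s + γ * ‖x - y‖ := by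
    intro x y s
    refine ciSup_le fun a => ?_
    have h1 := minExp_le_add Plow Pup s a x y (hne s a)
    have h2 : Rlow s a + γ * minExp Plow Pup s a y ≤ Gpess Plow Pup Rlow γ y s :=
      le_ciSup (hbdd y s) a
    nlinarith
  have hC : 0 ≤ γ * ‖v - w‖ := mul_nonneg hγ0.le (norm_nonneg _)
  rw [pi_norm_le_iff_of_nonneg hC]
  intro s
  rw [Pi.sub_apply, Real.norm_eq_abs, abs_le]
  constructor
  · have := hkey w v s
    rw [norm_sub_rev] at this
    linarith
  · linarith [hkey v w s]
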